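/- The generating function identity B_{2,1}(q) = (1/(q;q²)_∞) · ( q/(1−q) − q²/(1−q²) ) holds as an identity of formal power series, where B_{2,1}(q) = ∑_{n≥0} b_{2,1}(n) qⁿ. -/

import Mathlib

open Finset PowerSeries

/-- The list of hook lengths of the Young diagram of a partition whose row
lengths (in nonincreasing order) are given by the list `l`.  The box in row `i`,
column `j` (both 0-indexed) has hook length `(l_i - j) + #{i' > i : j < l_{i'}}`. -/
def hookCount (l : List ℕ) (k : ℕ) : ℕ :=
  ((Finset.range l.length ×ˢ Finset.range (l.getD 0 0)).filter
    (fun p => p.2 < l.getD p.1 0 ∧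
      (l.getD p.1 0 - p.2) +
        ((List.range l.length).filter (fun i' => p.1 < i' ∧ p.2 < l.getD i' 0)).length = k)).card

/-- `b t k n` : the total number of boxes with hook length `k` among the Young
diagrams of all `t`-regular partitions of `n`. -/
def b (t k n : ℕ) : ℕ :=
  ∑ p ∈ Finset.univ.filter (fun p : n.Partition => ∀ i ∈ p.parts, ¬ t ∣ i),
    hookCount ((p.parts.sort (· ≤ ·)).reverse) k


set_option linter.dupNamespace false
open PowerSeries

namespace Theorems100

noncomputable section

variable {α : Type*}

open Finset

open scoped Classical

/-- The partial product for the generating function for odd partitions.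
TODO: As `m` tends to infinity, this converges (in the `X`-adic topology).

If `m` is sufficiently large, the `i`th coefficient gives the number of odd partitions of the
natural number `i`: proved in `oddGF_prop`.
It is stated for an arbitrary field `α`, though it usually suffices to use `ℚ` or `ℝ`.
-/
def partialOddGF (m : ℕ) [Field α] :=
  ∏ i ∈ range m, (1 - (X : PowerSeries α) ^ (2 * i + 1))⁻¹

/-- The partial product for the generating function for distinct partitions.
TODO: As `m` tends to infinity, this converges (in the `X`-adic topology).

If `m` is sufficiently large, the `i`th coefficient gives the number of distinct partitions of the
natural number `i`: proved in `distinctGF_prop`.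
It is stated for an arbitrary commutative semiring `α`, though it usually suffices to use `ℕ`, `ℚ`
or `ℝ`.
-/
def partialDistinctGF (m : ℕ) [CommSemiring α] :=
  ∏ i ∈ range m, (1 + (X : PowerSeries α) ^ (i + 1))

open Finset.HasAntidiagonal

universe u
variable {ι : Type u}

/-- A convenience constructor for the power series whose coefficients indicate a subset. -/
def indicatorSeries (α : Type*) [Semiring α] (s : Set ℕ) : PowerSeries α :=
  PowerSeries.mk fun n => if n ∈ s then 1 else 0

theorem coeff_indicator (s : Set ℕ) [Semiring α] (n : ℕ) :
    coeff (R := α) n (indicatorSeries _ s) = if n ∈ s then 1 else 0 :=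
  coeff_mk _ _

theorem coeff_indicator_pos (s : Set ℕ) [Semiring α] (n : ℕ) (h : n ∈ s) :
    coeff (R := α) n (indicatorSeries _ s) = 1 := by rw [coeff_indicator, if_pos h]

theorem coeff_indicator_neg (s : Set ℕ) [Semiring α] (n : ℕ) (h : n ∉ s) :
    coeff (R := α) n (indicatorSeries _ s) = 0 := by rw [coeff_indicator, if_neg h]

theorem constantCoeff_indicator (s : Set ℕ) [Semiring α] :
    constantCoeff (R := α) (indicatorSeries _ s) = if 0 ∈ s then 1 else 0 :=
  rfl

theorem two_series (i : ℕ) [Semiring α] :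
    1 + (X : PowerSeries α) ^ i.succ = indicatorSeries α {0, i.succ} := by
  ext n
  simp only [coeff_indicator, coeff_one, coeff_X_pow, Set.mem_insert_iff, Set.mem_singleton_iff,
    map_add]
  cases' n with d
  · simp [(Nat.succ_ne_zero i).symm]
  · simp [Nat.succ_ne_zero d]

theorem num_series' [Field α] (i : ℕ) :
    (1 - (X : PowerSeries α) ^ (i + 1))⁻¹ = indicatorSeries α {k | i + 1 ∣ k} := by
  rw [PowerSeries.inv_eq_iff_mul_eq_one]
  · ext n
    cases n with
    | zero => simp [mul_sub, zero_pow, constantCoeff_indicator]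
    | succ n =>
      simp only [coeff_one, if_false, mul_sub, mul_one, coeff_indicator,
        LinearMap.map_sub, reduceCtorEq]
      simp_rw [coeff_mul, coeff_X_pow, coeff_indicator, @boole_mul _ _ _ _]
      erw [@sum_ite _ _ _ _ (fun x : ℕ × ℕ => x.1 ∈ {k | i + 1 ∣ k}) (fun _ => Classical.propDecidable _), sum_ite]
      simp_rw [@filter_filter _ _ _ _ _, sum_const_zero, add_zero, sum_const, nsmul_eq_mul, mul_one,
        sub_eq_iff_eq_add, zero_add]
      symm
      split_ifs with h
      · suffices #{a ∈ antidiagonal (n + 1) | i + 1 ∣ a.fst ∧ a.snd = i + 1} = 1 by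
          simp only [Set.mem_setOf_eq]; convert congr_arg ((↑) : ℕ → α) this; norm_cast
        rw [card_eq_one]
        cases' h with p hp
        refine ⟨((i + 1) * (p - 1), i + 1), ?_⟩
        ext ⟨a₁, a₂⟩
        simp only [mem_filter, Prod.mk.injEq, Finset.HasAntidiagonal.mem_antidiagonal, mem_singleton]
        constructor
        · rintro ⟨a_left, ⟨a, rfl⟩, rfl⟩
          refine ⟨?_, rfl⟩
          rw [Nat.mul_sub_left_distrib, ← hp, ← a_left, mul_one, Nat.add_sub_cancel]
        · rintro ⟨rfl, rfl⟩
          match p with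
          | 0 => rw [mul_zero] at hp; cases hp
          | p + 1 => rw [hp]; simp [mul_add]
      · suffices #{a ∈ antidiagonal (n + 1) | i + 1 ∣ a.fst ∧ a.snd = i + 1} = 0 by
          simp only [Set.mem_setOf_eq]; convert congr_arg ((↑) : ℕ → α) this; norm_cast
        rw [card_eq_zero]
        apply eq_empty_of_forall_notMem
        simp only [Prod.forall, mem_filter, not_and, Finset.HasAntidiagonal.mem_antidiagonal]
        rintro _ h₁ h₂ ⟨a, rfl⟩ rfl
        apply h
        simp [← h₂]
  · simp [zero_pow]

def mkOdd : ℕ ↪ ℕ :=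
  ⟨fun i => 2 * i + 1, fun x y h => by linarith⟩

-- The main workhorse of the partition theorem proof.
theorem partialGF_prop (α : Type*) [CommSemiring α] (n : ℕ) (s : Finset ℕ) (hs : ∀ i ∈ s, 0 < i)
    (c : ℕ → Set ℕ) (hc : ∀ i, i ∉ s → 0 ∈ c i) :
    #{p : n.Partition | (∀ j, p.parts.count j ∈ c j) ∧ ∀ j ∈ p.parts, j ∈ s} =
      coeff (R := α) n (∏ i ∈ s, indicatorSeries α ((· * i) '' c i)) := by
  simp_rw [coeff_prod, coeff_indicator, prod_boole, sum_boole]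
  apply congr_arg
  simp only [mem_univ, forall_true_left, not_and, not_forall, exists_prop,
    Set.mem_image, not_exists]
  set φ : (a : Nat.Partition n) →
    a ∈ filter (fun p ↦ (∀ (j : ℕ), Multiset.count j p.parts ∈ c j) ∧ ∀ j ∈ p.parts, j ∈ s) univ →
    ℕ →₀ ℕ := fun p _ => {
      toFun := fun i => Multiset.count i p.parts • i
      support := Finset.filter (fun i => i ≠ 0) p.parts.toFinset
      mem_support_toFun := fun a => by
        simp only [smul_eq_mul, ne_eq, mul_eq_zero, Multiset.count_eq_zero]
        rw [not_or, not_not]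
        simp only [Multiset.mem_toFinset, not_not, mem_filter] }
  refine Finset.card_bij φ ?_ ?_ ?_
  · intro a ha
    simp only [φ, not_forall, not_exists, not_and, exists_prop, mem_filter]
    rw [mem_finsuppAntidiag]
    dsimp only [ne_eq, smul_eq_mul, id_eq, eq_mpr_eq_cast, le_eq_subset, Finsupp.coe_mk]
    simp only [mem_univ, forall_true_left, not_and, not_forall, exists_prop,
      mem_filter, true_and] at ha
    refine ⟨⟨?_, fun i ↦ ?_⟩, fun i _ ↦ ⟨a.parts.count i, ha.1 i, rfl⟩⟩
    · conv_rhs => simp [← a.parts_sum]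
      rw [sum_multiset_count_of_subset _ s]
      · simp only [smul_eq_mul]
      · intro i
        simp only [Multiset.mem_toFinset, not_not, mem_filter]
        apply ha.2
    · simp only [ne_eq, Multiset.mem_toFinset, not_not, mem_filter, and_imp]
      exact fun hi _ ↦ ha.2 i hi
  · intro p₁ hp₁ p₂ hp₂ h
    apply Nat.Partition.ext
    simp only [true_and, mem_univ, mem_filter] at hp₁ hp₂
    ext i
    simp only [φ, ne_eq, Multiset.mem_toFinset, not_not, smul_eq_mul, Finsupp.mk.injEq] at h
    by_cases hi : i = 0
    · rw [hi]
      rw [Multiset.count_eq_zero_of_notMem]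
      · rw [Multiset.count_eq_zero_of_notMem]
        intro a; exact Nat.lt_irrefl 0 (hs 0 (hp₂.2 0 a))
      intro a; exact Nat.lt_irrefl 0 (hs 0 (hp₁.2 0 a))
    · rw [← mul_left_inj' hi]
      rw [funext_iff] at h
      exact h.2 i
  · simp only [φ, mem_filter, mem_finsuppAntidiag, mem_univ, exists_prop, true_and, and_assoc]
    rintro f ⟨hf, hf₃, hf₄⟩
    have hf' : f ∈ finsuppAntidiag s n := mem_finsuppAntidiag.mpr ⟨hf, hf₃⟩
    simp only [mem_finsuppAntidiag] at hf'
    refine ⟨⟨∑ i ∈ s, Multiset.replicate (f i / i) i, ?_, ?_⟩, ?_, ?_, ?_⟩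
    · intro i hi
      simp only [exists_prop, Multiset.mem_sum, mem_map, Function.Embedding.coeFn_mk] at hi
      rcases hi with ⟨t, ht, z⟩
      apply hs
      rwa [Multiset.eq_of_mem_replicate z]
    · simp_rw [Multiset.sum_sum, Multiset.sum_replicate, Nat.nsmul_eq_mul]
      rw [← hf'.1]
      refine sum_congr rfl fun i hi => Nat.div_mul_cancel ?_
      rcases hf₄ i hi with ⟨w, _, hw₂⟩
      rw [← hw₂]
      exact dvd_mul_left _ _
    · intro i
      simp_rw [Multiset.count_sum', Multiset.count_replicate, sum_ite_eq']
      split_ifs with h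
      · rcases hf₄ i h with ⟨w, hw₁, hw₂⟩
        rwa [← hw₂, Nat.mul_div_cancel _ (hs i h)]
      · exact hc _ h
    · intro i hi
      rw [Multiset.mem_sum] at hi
      rcases hi with ⟨j, hj₁, hj₂⟩
      rwa [Multiset.eq_of_mem_replicate hj₂]
    · ext i
      simp_rw [Multiset.count_sum', Multiset.count_replicate, sum_ite_eq']
      simp only [ne_eq, Multiset.mem_toFinset, not_not, smul_eq_mul, ite_mul,
        zero_mul, Finsupp.coe_mk]
      split_ifs with h
      · apply Nat.div_mul_cancel
        rcases hf₄ i h with ⟨w, _, hw₂⟩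
        apply Dvd.intro_left _ hw₂
      · apply symm
        rw [← Finsupp.notMem_support_iff]
        exact notMem_mono hf'.2 h

theorem partialOddGF_prop [Field α] (n m : ℕ) :
    #{p : n.Partition | ∀ j ∈ p.parts, j ∈ (range m).map mkOdd} = coeff (R := α) n (partialOddGF m) := by
  rw [partialOddGF]
  convert partialGF_prop α n
    ((range m).map mkOdd) _ (fun _ => Set.univ) (fun _ _ => trivial) using 2
  · congr
    simp only [true_and, forall_const, Set.mem_univ]
  · rw [Finset.prod_map]
    simp_rw [num_series']
    congr! 2 with x
    ext k
    constructor
    · rintro ⟨p, rfl⟩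
      refine ⟨p, ⟨⟩, ?_⟩
      apply mul_comm
    rintro ⟨a_w, -, rfl⟩
    apply Dvd.intro_left a_w rfl
  · intro i
    rw [mem_map]
    rintro ⟨a, -, rfl⟩
    exact Nat.succ_pos _

/-- If m is big enough, the partial product's coefficient counts the number of odd partitions -/
theorem oddGF_prop [Field α] (n m : ℕ) (h : n < m * 2) :
    #(Nat.Partition.odds n) = coeff (R := α) n (partialOddGF m) := by
  rw [← partialOddGF_prop, Nat.Partition.odds, Nat.Partition.restricted]
  congr with p
  apply forall₂_congr
  intro i hi
  have hin : i ≤ n := by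
    simpa [p.parts_sum] using Multiset.single_le_sum (fun _ _ => Nat.zero_le _) _ hi
  simp only [mkOdd, exists_prop, mem_range, Function.Embedding.coeFn_mk, mem_map]
  constructor
  · intro hi₂
    have := Nat.mod_add_div i 2
    rw [Nat.not_even_iff] at hi₂
    rw [hi₂, add_comm] at this
    refine ⟨i / 2, ?_, this⟩
    rw [Nat.div_lt_iff_lt_mul zero_lt_two]
    exact lt_of_le_of_lt hin h
  · rintro ⟨a, -, rfl⟩
    rw [even_iff_two_dvd]
    apply Nat.two_not_dvd_two_mul_add_one



/-- number of odd partitions -/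
noncomputable def podd (n : ℕ) : ℕ := #(Nat.Partition.odds n)

lemma mem_T_iff (l : List ℕ) (p : ℕ × ℕ)
    (hsort : ∀ i j, i ≤ j → j < l.length → l.getD j 0 ≤ l.getD i 0) :
    (p ∈ (Finset.range l.length ×ˢ Finset.range (l.getD 0 0)).filter
      (fun p => p.2 < l.getD p.1 0 ∧
        (l.getD p.1 0 - p.2) +
          ((List.range l.length).filter (fun i' => p.1 < i' ∧ p.2 < l.getD i' 0)).length = 1)) ↔
    (p.1 < l.length ∧ p.2 + 1 = l.getD p.1 0 ∧
      ∀ i', p.1 < i' → i' < l.length → l.getD i' 0 ≤ p.2) := by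
  obtain ⟨i, j⟩ := p
  simp only [mem_filter, mem_product, mem_range]
  constructor
  · rintro ⟨⟨hi, hj⟩, hlt, hsum⟩
    have h1 : l.getD i 0 - j ≥ 1 := by omega
    have h2 : ((List.range l.length).filter (fun i' => i < i' ∧ j < l.getD i' 0)).length = 0 := by
      omega
    rw [List.length_eq_zero_iff] at h2
    refine ⟨hi, by omega, fun i' hii' hi' => ?_⟩
    by_contra hle
    push_neg at hle
    have : i' ∈ (List.range l.length).filter (fun i' => i < i' ∧ j < l.getD i' 0) := by
      rw [List.mem_filter, List.mem_range]
      exact ⟨hi', by simp only [decide_eq_true_eq]; exact ⟨hii', hle⟩⟩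
    rw [h2] at this
    simp at this
  · rintro ⟨hi, heq, hall⟩
    have hj0 : j < l.getD 0 0 := by
      have := hsort 0 i (Nat.zero_le _) hi
      omega
    have h2 : ((List.range l.length).filter (fun i' => i < i' ∧ j < l.getD i' 0)) = [] := by
      rw [List.filter_eq_nil_iff]
      intro i' hi'
      simp only [List.mem_range] at hi'
      simp only [decide_eq_true_eq, not_and]
      intro hii'
      have := hall i' hii' hi'
      omega
    refine ⟨⟨hi, hj0⟩, by omega, ?_⟩
    rw [h2]
    simp only [List.length_nil]
    omega



lemma hook_one (l : List ℕ)
    (hsort : ∀ i j, i ≤ j → j < l.length → l.getD j 0 ≤ l.getD i 0)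
    (hpos : ∀ x ∈ l, 0 < x) : hookCount l 1 = l.toFinset.card := by
  rw [hookCount]
  apply Finset.card_bij (fun p _ => l.getD p.1 0)
  · rintro ⟨i, j⟩ hp
    rw [mem_T_iff l _ hsort] at hp
    obtain ⟨hi, -, -⟩ := hp
    rw [List.mem_toFinset, List.getD_eq_getElem _ _ hi]
    exact List.getElem_mem _
  · rintro ⟨i, j⟩ hp ⟨i', j'⟩ hp' hv
    rw [mem_T_iff l _ hsort] at hp hp'
    obtain ⟨hi, hj, hall⟩ := hp
    obtain ⟨hi', hj', hall'⟩ := hp'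
    simp only at hv hj hj' hall hall' ⊢
    have hii : i = i' := by
      rcases lt_trichotomy i i' with h | h | h
      · have := hall i' h hi'; omega
      · exact h
      · have := hall' i h hi; omega
    subst hii
    have : j = j' := by omega
    simp [this]
  · intro v hv
    rw [List.mem_toFinset] at hv
    have hv1 : 0 < v := hpos v hv
    set S := (Finset.range l.length).filter (fun i => l.getD i 0 = v) with hS
    have hSne : S.Nonempty := by
      obtain ⟨i, hi, rfl⟩ := List.mem_iff_getElem.mp hv
      exact ⟨i, by simp [hS, hi, List.getD_eq_getElem _ _ hi]⟩
    set i₀ := S.max' hSne with hi₀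
    have hmem : i₀ ∈ S := S.max'_mem hSne
    rw [hS, mem_filter, mem_range] at hmem
    obtain ⟨hlen, hval⟩ := hmem
    refine ⟨(i₀, v - 1), ?_, by simpa using hval⟩
    rw [mem_T_iff l _ hsort]
    refine ⟨hlen, by simp only; omega, fun i' h1 h2 => ?_⟩
    simp only
    have hle : l.getD i' 0 ≤ v := hval ▸ hsort i₀ i' h1.le h2
    rcases eq_or_lt_of_le hle with h | h
    · exfalso
      have : i' ∈ S := by rw [hS, mem_filter, mem_range]; exact ⟨h2, h⟩
      have := S.le_max' i' this
      omega
    · omega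



def eraseP (k n : ℕ) (p : n.Partition) (hp : k ∈ p.parts) : (n - k).Partition where
  parts := p.parts.erase k
  parts_pos := fun hx => p.parts_pos (Multiset.mem_of_mem_erase hx)
  parts_sum := by
    have h := Multiset.cons_erase hp
    have hs : (k ::ₘ p.parts.erase k).sum = n := by rw [h]; exact p.parts_sum
    rw [Multiset.sum_cons] at hs
    have hkn : k ≤ n := by
      rw [← p.parts_sum]
      exact Multiset.single_le_sum (fun _ _ => Nat.zero_le _) _ hp
    omega

def consP (k n : ℕ) (hk : 0 < k) (hkn : k ≤ n) (q : (n - k).Partition) : n.Partition where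
  parts := k ::ₘ q.parts
  parts_pos := fun hx => by
    rcases Multiset.mem_cons.mp hx with h | h
    · omega
    · exact q.parts_pos h
  parts_sum := by rw [Multiset.sum_cons, q.parts_sum]; omega


lemma count_with_part (k n : ℕ) (hk : Odd k) (hkn : k ≤ n) :
    #((Nat.Partition.odds n).filter (fun p => k ∈ p.parts)) = podd (n - k) := by
  rw [podd]
  refine Finset.card_bij' (fun p hp => eraseP k n p (by simp only [mem_filter] at hp; exact hp.2))
    (fun q _ => consP k n hk.pos hkn q) ?_ ?_ ?_ ?_
  · rintro p hp
    simp only [mem_filter, Nat.Partition.odds, Nat.Partition.restricted, mem_univ, true_and] at hp ⊢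
    intro i hi
    exact hp.1 i (Multiset.mem_of_mem_erase hi)
  · rintro q hq
    simp only [Nat.Partition.odds, Nat.Partition.restricted, mem_filter, mem_univ, true_and] at hq ⊢
    refine ⟨fun i hi => ?_, Multiset.mem_cons_self _ _⟩
    rcases Multiset.mem_cons.mp hi with rfl | hi
    · exact Nat.not_even_iff_odd.mpr hk
    · exact hq i hi
  · rintro p hp
    apply Nat.Partition.ext
    simp only [mem_filter] at hp
    exact Multiset.cons_erase hp.2
  · rintro q hq
    apply Nat.Partition.ext
    exact Multiset.erase_cons_head _ _


lemma sorted_props (n : ℕ) (p : n.Partition) :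
    (∀ i j, i ≤ j → j < ((p.parts.sort (· ≤ ·)).reverse).length →
      ((p.parts.sort (· ≤ ·)).reverse).getD j 0 ≤ ((p.parts.sort (· ≤ ·)).reverse).getD i 0) ∧
    (∀ x ∈ (p.parts.sort (· ≤ ·)).reverse, 0 < x) ∧
    ((p.parts.sort (· ≤ ·)).reverse).toFinset = p.parts.toFinset := by
  set s := p.parts.sort (· ≤ ·) with hs
  have hsort : s.Pairwise (· ≤ ·) := p.parts.pairwise_sort _
  have hlen : s.reverse.length = s.length := s.length_reverse
  refine ⟨fun i j hij hj => ?_, fun x hx => ?_, ?_⟩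
  · have hi : i < s.reverse.length := lt_of_le_of_lt hij hj
    rw [List.getD_eq_getElem _ _ hj, List.getD_eq_getElem _ _ hi]
    rw [List.getElem_reverse, List.getElem_reverse]
    rcases eq_or_lt_of_le hij with rfl | hlt
    · exact le_refl _
    · have := List.pairwise_iff_getElem.mp hsort (s.length - 1 - j) (s.length - 1 - i)
        (by omega) (by omega) (by omega)
      exact this
  · rw [List.mem_reverse, hs, Multiset.mem_sort] at hx
    exact p.parts_pos hx
  · rw [List.toFinset_reverse]
    ext a
    simp [hs]

lemma sum_card_eq (n : ℕ) :
    (∑ p ∈ Nat.Partition.odds n, #p.parts.toFinset)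
      = ∑ k ∈ range (n + 1), (if Odd k then podd (n - k) else 0) := by
  have step : ∀ p ∈ Nat.Partition.odds n,
      p.parts.toFinset.card = ∑ k ∈ range (n + 1), (if k ∈ p.parts then 1 else 0) := by
    intro p _
    rw [← Finset.card_filter]
    congr 1
    ext k
    simp only [mem_filter, mem_range, List.mem_toFinset, Multiset.mem_toFinset]
    constructor
    · intro hk
      refine ⟨?_, hk⟩
      have : k ≤ n := by
        rw [← p.parts_sum]
        exact Multiset.single_le_sum (fun _ _ => Nat.zero_le _) _ hk
      omega
    · exact fun h => h.2
  rw [Finset.sum_congr rfl step, Finset.sum_comm]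
  refine Finset.sum_congr rfl fun k hk => ?_
  rw [mem_range] at hk
  rw [← Finset.sum_filter]
  simp only [Finset.sum_const, smul_eq_mul, mul_one]
  by_cases hodd : Odd k
  · rw [if_pos hodd, count_with_part k n hodd (by omega)]
  · rw [if_neg hodd, Finset.card_eq_zero, Finset.filter_eq_empty_iff]
    intro p hp
    simp only [Nat.Partition.odds, Nat.Partition.restricted, mem_filter, mem_univ, true_and] at hp
    intro hkp
    exact hodd (Nat.not_even_iff_odd.mp (hp k hkp))

lemma b_eq (n : ℕ) :
    b 2 1 n = ∑ k ∈ range (n + 1), (if Odd k then podd (n - k) else 0) := by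
  have hfilter : (Finset.univ.filter (fun p : n.Partition => ∀ i ∈ p.parts, ¬ 2 ∣ i))
      = Nat.Partition.odds n := by
    rw [Nat.Partition.odds, Nat.Partition.restricted]
    ext p
    simp [even_iff_two_dvd]
  rw [b, hfilter, ← sum_card_eq]
  refine Finset.sum_congr rfl fun p _ => ?_
  obtain ⟨h1, h2, h3⟩ := sorted_props n p
  rw [hook_one _ h1 h2, h3]

lemma S_eq : (X : ℚ⟦X⟧) * (1 - X)⁻¹ - X ^ 2 * (1 - X ^ 2)⁻¹
    = indicatorSeries ℚ {j | Odd j} := by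
  have h1 : (X : ℚ⟦X⟧) * (1 - X)⁻¹ = (1 - X)⁻¹ * X ^ 1 := by ring
  have h2 : (X : ℚ⟦X⟧) ^ 2 * (1 - X ^ 2)⁻¹ = (1 - X ^ 2)⁻¹ * X ^ 2 := by ring
  have e1 : (1 - (X : ℚ⟦X⟧))⁻¹ = indicatorSeries ℚ {k | 1 ∣ k} := by
    simpa using num_series' (α := ℚ) 0
  have e2 : (1 - (X : ℚ⟦X⟧) ^ 2)⁻¹ = indicatorSeries ℚ {k | 2 ∣ k} := num_series' (α := ℚ) 1
  ext n
  rw [map_sub, h1, h2, e1, e2, PowerSeries.coeff_mul_X_pow', PowerSeries.coeff_mul_X_pow',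
    coeff_indicator]
  simp only [coeff_indicator, Set.mem_setOf_eq, Nat.odd_iff]
  rcases Nat.lt_or_ge n 1 with hn | hn
  · interval_cases n
    norm_num
  rcases Nat.lt_or_ge n 2 with hn2 | hn2
  · interval_cases n
    norm_num
  rw [if_pos hn, if_pos hn2, if_pos (Nat.one_dvd _)]
  by_cases hpar : n % 2 = 1
  · rw [if_pos hpar, if_neg (by omega)]
    norm_num
  · rw [if_neg hpar, if_pos (by omega)]
    norm_num

end
end Theorems100

open Theorems100 in
theorem stmt6 : ∀ n : ℕ,
    (PowerSeries.coeff (R := ℚ) n) (PowerSeries.mk fun m => (b 2 1 m : ℚ)) =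
      (PowerSeries.coeff (R := ℚ) n)
        ((∏ m ∈ Finset.range (n + 1), (1 - (X : ℚ⟦X⟧) ^ (2 * m + 1))⁻¹) *
          (X * (1 - X)⁻¹ - X ^ 2 * (1 - X ^ 2)⁻¹)) := by
  intro n
  rw [coeff_mk, b_eq]
  have hA : (∏ m ∈ Finset.range (n + 1), (1 - (X : ℚ⟦X⟧) ^ (2 * m + 1))⁻¹)
      = partialOddGF (n + 1) := rfl
  rw [hA, S_eq, coeff_mul, Finset.Nat.sum_antidiagonal_eq_sum_range_succ_mk,
    ← Finset.sum_range_reflect]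
  push_cast
  refine Finset.sum_congr rfl fun k hk => ?_
  rw [Finset.mem_range] at hk
  rw [← oddGF_prop k (n + 1) (by omega), coeff_indicator]
  have h1 : n - (n - k) = k := by omega
  rw [h1]
  have h2 : ((n - k) ∈ {j | Odd j}) = Odd (n - k) := by simp
  rw [h2]
  split_ifs with h
  · rw [podd, mul_one]
  · rw [mul_zero]
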